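/- Let n ≥ 2, p, q ∈ (0,1), let the prior on Θ_n be uniform, fix θ ∈ Θ_n, let a ∈ (0, 1/2) with (e/a)·ρ(p,q)^{n/2} < 1, and let k be an integer with k ≥ a·n. Then P_θ Π(B_n(θ,k) | X^n) ≥ 1 − (1/2)·((e/a)·ρ(p,q)^{n/2})^{a·n}·(1 − (e/a)·ρ(p,q)^{n/2})^{-1}. -/

import Mathlib

open Finset Real Filter

/-- The set of potential edges of an `n`-vertex graph: pairs `(i,j)` with `i < j`. -/
abbrev Edge (n : ℕ) := {e : Fin n × Fin n // e.1 < e.2}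

/-- An observed graph: an edge indicator for each potential edge. -/
abbrev ObsGraph (n : ℕ) := Edge n → Bool

/-- Edge probability under assignment `θ`: `p` within communities, `q` between. -/
noncomputable def edgeProb {n : ℕ} (p q : ℝ) (θ : Fin n → Bool) (e : Edge n) : ℝ :=
  if θ e.val.1 = θ e.val.2 then p else q

/-- Probability mass function of the observed graph under `θ`. -/
noncomputable def graphPMF {n : ℕ} (p q : ℝ) (θ : Fin n → Bool) (x : ObsGraph n) : ℝ :=
  ∏ e : Edge n, if x e then edgeProb p q θ e else 1 - edgeProb p q θ e

/-- Hellinger affinity of Bernoulli parameters. -/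
noncomputable def rho (p q : ℝ) : ℝ := Real.sqrt (p * q) + Real.sqrt ((1 - p) * (1 - q))

/-- Edges whose probability changes from `p` to `q` when replacing `θ` by `η`. -/
def D1 {n : ℕ} (θ η : Fin n → Bool) : Finset (Fin n × Fin n) :=
  Finset.univ.filter fun e => e.1 < e.2 ∧ θ e.1 = θ e.2 ∧ η e.1 ≠ η e.2

/-- Edges whose probability changes from `q` to `p` when replacing `θ` by `η`. -/
def D2 {n : ℕ} (θ η : Fin n → Bool) : Finset (Fin n × Fin n) :=
  Finset.univ.filter fun e => e.1 < e.2 ∧ θ e.1 ≠ θ e.2 ∧ η e.1 = η e.2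

/-- Hamming distance. -/
def hdist {n : ℕ} (θ η : Fin n → Bool) : ℕ := (Finset.univ.filter fun i => θ i ≠ η i).card

/-- The metric `k(θ,η) = h(θ,η) ∧ (n - h(θ,η))`. -/
def kdist {n : ℕ} (θ η : Fin n → Bool) : ℕ := min (hdist θ η) (n - hdist θ η)

/-- Size of the smallest community. -/
def countOnes {n : ℕ} (θ : Fin n → Bool) : ℕ := (Finset.univ.filter fun i => θ i = true).card

/-- The parameter space `Θ_n`. -/
def Theta (n : ℕ) : Finset (Fin n → Bool) :=
  Finset.univ.filter fun θ => 2 * countOnes θ ≤ n ∧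
    ∀ i : Fin n, 2 * countOnes θ = n → (i : ℕ) = 0 → θ i = false

/-- Posterior mass of `A ⊆ Θ_n` given data `x`, under prior mass function `π`. -/
noncomputable def postMass {n : ℕ} (p q : ℝ) (pri : (Fin n → Bool) → ℝ)
    (A : Finset (Fin n → Bool)) (x : ObsGraph n) : ℝ :=
  (∑ η ∈ A, pri η * graphPMF p q η x) / (∑ η ∈ Theta n, pri η * graphPMF p q η x)

/-- `P_θ`-expectation of the posterior mass of `A`. -/
noncomputable def expPostMass {n : ℕ} (p q : ℝ) (pri : (Fin n → Bool) → ℝ)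
    (θ : Fin n → Bool) (A : Finset (Fin n → Bool)) : ℝ :=
  ∑ x : ObsGraph n, graphPMF p q θ x * postMass p q pri A x

/-- The uniform prior on `Θ_n`. -/
noncomputable def unifPrior (n : ℕ) : (Fin n → Bool) → ℝ := fun _ => ((2:ℝ) ^ (n - 1))⁻¹

/-- Hamming ball `B_n(θ,k)` inside `Θ_n`. -/
def hball {n : ℕ} (θ : Fin n → Bool) (k : ℕ) : Finset (Fin n → Bool) :=
  (Theta n).filter fun η => kdist η θ ≤ k

lemma sum_graph (n : ℕ) (f : Edge n → Bool → ℝ) :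
    ∑ x : ObsGraph n, ∏ e, f e (x e) = ∏ e, (f e true + f e false) := by
  have h := Finset.prod_univ_sum (fun _ : Edge n => (Finset.univ : Finset Bool)) f
  rw [Fintype.piFinset_univ] at h
  rw [← h]
  exact Finset.prod_congr rfl fun e _ => by rw [Fintype.sum_bool]

section
variable {n : ℕ} {p q : ℝ} (hp : p ∈ Set.Ioo (0:ℝ) 1) (hq : q ∈ Set.Ioo (0:ℝ) 1)
include hp hq

lemma edgeProb_pos (θ : Fin n → Bool) (e : Edge n) : 0 < edgeProb p q θ e := by
  unfold edgeProb; split <;> [exact hp.1; exact hq.1]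

lemma edgeProb_lt_one (θ : Fin n → Bool) (e : Edge n) : edgeProb p q θ e < 1 := by
  unfold edgeProb; split <;> [exact hp.2; exact hq.2]

lemma graphPMF_pos (θ : Fin n → Bool) (x : ObsGraph n) : 0 < graphPMF p q θ x := by
  refine Finset.prod_pos fun e _ => ?_
  split
  · exact edgeProb_pos hp hq θ e
  · linarith [edgeProb_lt_one hp hq θ e]

omit hp hq in

lemma graphPMF_sum_one (θ : Fin n → Bool) : ∑ x : ObsGraph n, graphPMF p q θ x = 1 := by
  have := sum_graph n (fun e b => if b then edgeProb p q θ e else 1 - edgeProb p q θ e)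
  simp only [graphPMF]
  rw [this]
  simp

end

lemma sqrt_prod' {ι : Type*} (s : Finset ι) (f : ι → ℝ) (hf : ∀ i ∈ s, 0 ≤ f i) :
    Real.sqrt (∏ i ∈ s, f i) = ∏ i ∈ s, Real.sqrt (f i) := by
  induction s using Finset.cons_induction with
  | empty => simp
  | cons i s hi ih =>
    rw [Finset.prod_cons, Finset.prod_cons, Real.sqrt_mul (hf i (Finset.mem_cons_self i s)),
      ih fun j hj => hf j (Finset.mem_cons_of_mem hj)]

/-- The set of edges whose probability differs between `θ` and `η`. -/

def Dd {n : ℕ} (θ η : Fin n → Bool) : Finset (Edge n) :=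
  Finset.univ.filter fun e => ¬ ((θ e.val.1 = θ e.val.2) ↔ (η e.val.1 = η e.val.2))

lemma affinity_eq {n : ℕ} {p q : ℝ} (hp : p ∈ Set.Ioo (0:ℝ) 1) (hq : q ∈ Set.Ioo (0:ℝ) 1)
    (θ η : Fin n → Bool) :
    ∑ x : ObsGraph n, Real.sqrt (graphPMF p q θ x * graphPMF p q η x)
      = rho p q ^ (Dd θ η).card := by
  have key : ∀ x : ObsGraph n, Real.sqrt (graphPMF p q θ x * graphPMF p q η x)
      = ∏ e : Edge n, Real.sqrt
          ((if x e then edgeProb p q θ e else 1 - edgeProb p q θ e) *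
           (if x e then edgeProb p q η e else 1 - edgeProb p q η e)) := by
    intro x
    rw [graphPMF, graphPMF, ← Finset.prod_mul_distrib]
    refine sqrt_prod' _ _ fun e _ => ?_
    have h1 := edgeProb_pos hp hq θ e
    have h2 := edgeProb_pos hp hq η e
    have h3 := edgeProb_lt_one hp hq θ e
    have h4 := edgeProb_lt_one hp hq η e
    split <;> nlinarith
  simp only [key]
  rw [sum_graph n (fun e b => Real.sqrt
      ((if b then edgeProb p q θ e else 1 - edgeProb p q θ e) *
       (if b then edgeProb p q η e else 1 - edgeProb p q η e)))]
  simp only [if_true, Bool.false_eq_true, if_false]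
  have factor : ∀ e : Edge n,
      (Real.sqrt (edgeProb p q θ e * edgeProb p q η e) +
        Real.sqrt ((1 - edgeProb p q θ e) * (1 - edgeProb p q η e)))
      = if e ∈ Dd θ η then rho p q else 1 := by
    intro e
    by_cases h : (θ e.val.1 = θ e.val.2) ↔ (η e.val.1 = η e.val.2)
    · have hmem : e ∉ Dd θ η := by simp [Dd, h]
      rw [if_neg hmem]
      have heq : edgeProb p q θ e = edgeProb p q η e := by
        unfold edgeProb
        by_cases hc : θ e.val.1 = θ e.val.2
        · rw [if_pos hc, if_pos (h.mp hc)]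
        · rw [if_neg hc, if_neg (fun hc2 => hc (h.mpr hc2))]
      rw [← heq, Real.sqrt_mul_self (le_of_lt (edgeProb_pos hp hq θ e)),
        Real.sqrt_mul_self (by linarith [edgeProb_lt_one hp hq θ e])]
      ring
    · have hmem : e ∈ Dd θ η := by simp [Dd, h]
      rw [if_pos hmem]
      unfold edgeProb rho
      by_cases hc : θ e.val.1 = θ e.val.2
      · have hc2 : ¬ (η e.val.1 = η e.val.2) := fun h2 => h ⟨fun _ => h2, fun _ => hc⟩
        rw [if_pos hc, if_neg hc2]
      · have hc2 : η e.val.1 = η e.val.2 := by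
          by_contra h2; exact h ⟨fun h3 => absurd h3 hc, fun h3 => absurd h3 h2⟩
        rw [if_neg hc, if_pos hc2, mul_comm q p, mul_comm (1-q) (1-p)]
  rw [Finset.prod_congr rfl (fun e _ => factor e)]
  rw [Finset.prod_ite_mem, Finset.univ_inter]
  exact Finset.prod_const _

lemma hdist_le {n : ℕ} (θ η : Fin n → Bool) : hdist θ η ≤ n := by
  simpa [hdist] using Finset.card_filter_le Finset.univ (fun i => θ i ≠ η i)

/-- Counting pairs `(i,j)` with `i < j` satisfying a symmetric irreflexive condition. -/

lemma card_edge_filter {n : ℕ} (c : Fin n × Fin n → Prop) [DecidablePred c]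
    (hsym : ∀ i j, c (i, j) ↔ c (j, i)) (hirr : ∀ i, ¬ c (i, i)) :
    2 * (Finset.univ.filter fun e : Edge n => c e.val).card
      = (Finset.univ.filter c).card := by
  classical
  set A := Finset.univ.filter fun e : Fin n × Fin n => e.1 < e.2 ∧ c e with hA
  set B := Finset.univ.filter fun e : Fin n × Fin n => e.2 < e.1 ∧ c e with hB
  have h1 : (Finset.univ.filter fun e : Edge n => c e.val).card = A.card := by
    refine Finset.card_bij' (fun e _ => e.val) (fun a ha => ⟨a, (Finset.mem_filter.mp ha).2.1⟩)
      ?_ ?_ ?_ ?_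
    · intro e he
      simp only [hA, Finset.mem_filter, Finset.mem_univ, true_and]
      exact ⟨e.prop, (Finset.mem_filter.mp he).2⟩
    · intro a ha
      simp only [Finset.mem_filter, Finset.mem_univ, true_and]
      exact (Finset.mem_filter.mp ha).2.2
    · intro e _; rfl
    · intro a _; rfl
  have h2 : A.card = B.card := by
    refine Finset.card_bij' (fun e _ => Prod.swap e) (fun e _ => Prod.swap e) ?_ ?_ ?_ ?_
    · intro e he
      simp only [hA, hB, Finset.mem_filter, Finset.mem_univ, true_and,
        Prod.fst_swap, Prod.snd_swap] at he ⊢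
      exact ⟨he.1, (hsym e.2 e.1).mpr he.2⟩
    · intro e he
      simp only [hA, hB, Finset.mem_filter, Finset.mem_univ, true_and,
        Prod.fst_swap, Prod.snd_swap] at he ⊢
      exact ⟨he.1, (hsym e.2 e.1).mpr he.2⟩
    · intro e _; simp
    · intro e _; simp
  have h3 : Finset.univ.filter c = A ∪ B := by
    ext e
    simp only [hA, hB, Finset.mem_filter, Finset.mem_union, Finset.mem_univ, true_and]
    constructor
    · intro hc
      have hne : e.1 ≠ e.2 := by
        intro h
        exact hirr e.1 (by rwa [show e = (e.1, e.2) from rfl, ← h] at hc)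
      rcases lt_or_gt_of_ne hne with h | h
      · exact Or.inl ⟨h, hc⟩
      · exact Or.inr ⟨h, hc⟩
    · rintro (⟨_, hc⟩ | ⟨_, hc⟩) <;> exact hc
  have hdisj : Disjoint A B := by
    rw [Finset.disjoint_left]
    intro e heA heB
    simp only [hA, hB, Finset.mem_filter] at heA heB
    exact absurd heB.2.1 (not_lt_of_gt heA.2.1)
  rw [h3, Finset.card_union_of_disjoint hdisj, h1, h2, two_mul]

lemma card_pairs_ne {n : ℕ} (f : Fin n → Prop) [DecidablePred f] :
    (Finset.univ.filter fun e : Fin n × Fin n => ¬ (f e.1 ↔ f e.2)).card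
      = 2 * (Finset.univ.filter f).card * (n - (Finset.univ.filter f).card) := by
  classical
  set S := Finset.univ.filter f with hS
  set T := Finset.univ.filter (fun i => ¬ f i) with hT
  have hTcard : T.card = n - S.card := by
    have := Finset.card_filter_add_card_filter_not (s := (Finset.univ : Finset (Fin n)))
      (p := f)
    simp only [Finset.card_univ, Fintype.card_fin] at this
    rw [hT, hS]
    omega
  have hsplit : (Finset.univ.filter fun e : Fin n × Fin n => ¬ (f e.1 ↔ f e.2))
      = (S ×ˢ T) ∪ (T ×ˢ S) := by
    ext e
    simp only [Finset.mem_filter, Finset.mem_union, Finset.mem_product, hS, hT,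
      Finset.mem_univ, true_and]
    tauto
  have hdisj : Disjoint (S ×ˢ T) (T ×ˢ S) := by
    rw [Finset.disjoint_left]
    intro e he1 he2
    simp only [Finset.mem_product, hS, hT, Finset.mem_filter, Finset.mem_univ, true_and] at he1 he2
    exact he2.1 he1.1
  rw [hsplit, Finset.card_union_of_disjoint hdisj, Finset.card_product, Finset.card_product,
    hTcard]
  ring

lemma card_Dd {n : ℕ} (θ η : Fin n → Bool) :
    (Dd θ η).card = hdist θ η * (n - hdist θ η) := by
  classical
  have hbool : ∀ (a b c d : Bool), (¬ ((a = b) ↔ (c = d))) ↔ ¬ ((a ≠ c) ↔ (b ≠ d)) := by decide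
  have hDd : Dd θ η = Finset.univ.filter
      (fun e : Edge n => ¬ ((θ e.val.1 ≠ η e.val.1) ↔ (θ e.val.2 ≠ η e.val.2))) := by
    unfold Dd
    refine Finset.filter_congr fun e _ => ?_
    exact (hbool (θ e.val.1) (θ e.val.2) (η e.val.1) (η e.val.2))
  have hcount := card_edge_filter
    (fun e : Fin n × Fin n => ¬ ((θ e.1 ≠ η e.1) ↔ (θ e.2 ≠ η e.2)))
    (fun i j => by tauto) (fun i => by tauto)
  have hpairs := card_pairs_ne (fun i : Fin n => θ i ≠ η i)
  have : 2 * (Dd θ η).card = 2 * (hdist θ η * (n - hdist θ η)) := by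
    rw [hDd, hcount, hpairs]
    unfold hdist
    ring
  omega

lemma countOnes_compl {n : ℕ} (η : Fin n → Bool) :
    countOnes (fun i => !η i) = n - countOnes η := by
  unfold countOnes
  have h := Finset.card_filter_add_card_filter_not
    (s := (Finset.univ : Finset (Fin n))) (p := fun i => η i = true)
  simp only [Finset.card_univ, Fintype.card_fin] at h
  have : (Finset.univ.filter fun i => (!η i) = true) =
      (Finset.univ.filter fun i => ¬ (η i = true)) := by
    refine Finset.filter_congr fun i _ => ?_
    cases η i <;> simp
  rw [this]
  omega

lemma not_both_theta {n : ℕ} (hn : 1 ≤ n) (η : Fin n → Bool) (hη : η ∈ Theta n) :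
    (fun i => !η i) ∉ Theta n := by
  intro hc
  simp only [Theta, Finset.mem_filter, Finset.mem_univ, true_and] at hη hc
  have hco := countOnes_compl η
  have hle : countOnes η ≤ n := by
    simpa [countOnes] using Finset.card_filter_le Finset.univ (fun i => η i = true)
  have heq : 2 * countOnes η = n := by omega
  have heq2 : 2 * countOnes (fun i => !η i) = n := by omega
  have h1 := hη.2 ⟨0, hn⟩ heq rfl
  have h2 := hc.2 ⟨0, hn⟩ heq2 rfl
  rw [h1] at h2
  simp at h2

lemma hdist_compl {n : ℕ} (η θ : Fin n → Bool) :
    hdist (fun i => !η i) θ = n - hdist η θ := by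
  unfold hdist
  have h := Finset.card_filter_add_card_filter_not
    (s := (Finset.univ : Finset (Fin n))) (p := fun i => η i ≠ θ i)
  simp only [Finset.card_univ, Fintype.card_fin] at h
  have : (Finset.univ.filter fun i => (!η i) ≠ θ i) =
      (Finset.univ.filter fun i => ¬ (η i ≠ θ i)) := by
    refine Finset.filter_congr fun i _ => ?_
    cases η i <;> cases θ i <;> simp
  rw [this]
  omega

/-- Functions at Hamming distance exactly `m` from `θ` number `n.choose m`. -/

lemma card_hdist_eq {n : ℕ} (θ : Fin n → Bool) (m : ℕ) :
    (Finset.univ.filter fun v : Fin n → Bool => hdist v θ = m).card = n.choose m := by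
  classical
  have hpc := Finset.card_powersetCard m (Finset.univ : Finset (Fin n))
  rw [Finset.card_univ, Fintype.card_fin] at hpc
  rw [← hpc]
  refine Finset.card_bij' (fun v _ => Finset.univ.filter fun i => v i ≠ θ i)
    (fun s _ => fun i => if i ∈ s then !θ i else θ i) ?_ ?_ ?_ ?_
  · intro v hv
    simp only [Finset.mem_filter, Finset.mem_univ, true_and] at hv
    rw [Finset.mem_powersetCard]
    exact ⟨Finset.subset_univ _, hv⟩
  · intro s hs
    rw [Finset.mem_powersetCard] at hs
    simp only [Finset.mem_filter, Finset.mem_univ, true_and]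
    unfold hdist
    rw [← hs.2]
    congr 1
    ext i
    simp only [Finset.mem_filter, Finset.mem_univ, true_and]
    by_cases hi : i ∈ s
    · simp only [hi, if_pos, iff_true]
      cases θ i <;> simp
    · simp [hi]
  · intro v hv
    funext i
    simp only [Finset.mem_filter, Finset.mem_univ, true_and]
    by_cases hi : v i = θ i
    · simp [hi]
    · rw [if_pos hi]
      cases hθi : θ i <;> cases hvi : v i <;> simp_all
  · intro s hs
    ext i
    simp only [Finset.mem_filter, Finset.mem_univ, true_and]
    by_cases hi : i ∈ s
    · simp only [hi, if_pos, iff_true]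
      cases θ i <;> simp
    · simp [hi]

lemma card_theta_kdist {n : ℕ} (hn : 1 ≤ n) (θ : Fin n → Bool) (m : ℕ) :
    ((Theta n).filter fun η => kdist η θ = m).card ≤ n.choose m := by
  classical
  rw [← card_hdist_eq θ m]
  refine Finset.card_le_card_of_injOn
    (fun η => if hdist η θ = m then η else fun i => !η i) ?_ ?_
  · intro η hη
    simp only [Finset.mem_coe, Finset.mem_filter, Finset.mem_univ, true_and] at hη ⊢
    rcases hη with ⟨_, hkd⟩
    unfold kdist at hkd
    by_cases h : hdist η θ = m
    · rw [if_pos h]; exact h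
    · rw [if_neg h, hdist_compl]
      omega
  · intro η1 h1 η2 h2 heq
    simp only [Finset.coe_filter, Set.mem_setOf_eq] at h1 h2
    simp only at heq
    have compl_inj : ∀ v w : Fin n → Bool, (fun i => !v i) = (fun i => !w i) → v = w := by
      intro v w hvw
      funext i
      have := congrFun hvw i
      cases hv : v i <;> cases hw : w i <;> simp_all
    by_cases c1 : hdist η1 θ = m <;> by_cases c2 : hdist η2 θ = m
    · rwa [if_pos c1, if_pos c2] at heq
    · rw [if_pos c1, if_neg c2] at heq
      exact absurd (heq ▸ h1.1) (not_both_theta hn η2 h2.1)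
    · rw [if_neg c1, if_pos c2] at heq
      exact absurd (heq.symm ▸ h2.1) (not_both_theta hn η1 h1.1)
    · rw [if_neg c1, if_neg c2] at heq
      exact compl_inj _ _ heq

lemma pow_self_le_exp_factorial (m : ℕ) :
    (m : ℝ) ^ m ≤ Real.exp 1 ^ m * m.factorial := by
  induction m with
  | zero => simp
  | succ m ih =>
    rcases Nat.eq_zero_or_pos m with hm | hm
    · subst hm
      simp only [pow_one, Nat.factorial, Nat.cast_one]
      have := Real.add_one_le_exp (1 : ℝ)
      push_cast
      nlinarith
    · have hmR : (0:ℝ) < m := by exact_mod_cast hm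
      have step : ((m:ℝ) + 1) ^ m ≤ Real.exp 1 * (m:ℝ) ^ m := by
        have h1 : (1 : ℝ) + 1 / m ≤ Real.exp (1 / m) := by
          have := Real.add_one_le_exp (1 / (m:ℝ))
          linarith
        have h2 : ((1 : ℝ) + 1 / m) ^ m ≤ Real.exp (1 / m) ^ m :=
          pow_le_pow_left₀ (by positivity) h1 m
        have h3 : Real.exp (1 / (m:ℝ)) ^ m = Real.exp 1 := by
          rw [← Real.exp_nat_mul]
          congr 1
          field_simp
        have h4 : ((m:ℝ) + 1) ^ m = ((1:ℝ) + 1/m) ^ m * (m:ℝ) ^ m := by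
          rw [← mul_pow]
          congr 1
          field_simp
        rw [h4]
        have h5 : ((1:ℝ) + 1/m) ^ m ≤ Real.exp 1 := h3 ▸ h2
        exact mul_le_mul_of_nonneg_right h5 (by positivity)
      have hfac : ((m+1 : ℕ) : ℝ) ^ (m+1) = ((m:ℝ)+1) ^ m * ((m:ℝ)+1) := by
        push_cast; ring
      rw [hfac]
      have : ((m:ℝ)+1) ^ m * ((m:ℝ)+1) ≤ Real.exp 1 * (m:ℝ)^m * ((m:ℝ)+1) := by
        apply mul_le_mul_of_nonneg_right step (by positivity)
      refine le_trans this ?_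
      have hexp : (0:ℝ) < Real.exp 1 := Real.exp_pos 1
      calc Real.exp 1 * (m:ℝ)^m * ((m:ℝ)+1)
          ≤ Real.exp 1 * (Real.exp 1 ^ m * m.factorial) * ((m:ℝ)+1) := by
            apply mul_le_mul_of_nonneg_right _ (by positivity)
            exact mul_le_mul_of_nonneg_left ih (le_of_lt hexp)
        _ = Real.exp 1 ^ (m+1) * ((m+1) * m.factorial) := by ring
        _ = Real.exp 1 ^ (m+1) * ((m+1).factorial) := by
            rw [Nat.factorial_succ]; push_cast; ring

lemma choose_le_ea {n m : ℕ} {a : ℝ} (ha : 0 < a) (hm : 1 ≤ m) (hman : a * n ≤ m) :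
    (n.choose m : ℝ) ≤ (Real.exp 1 / a) ^ m := by
  have hmR : (0:ℝ) < m := by exact_mod_cast hm
  have h1 : (n.choose m : ℝ) ≤ (n:ℝ) ^ m / m.factorial := Nat.choose_le_pow_div m n
  have hfac : (0:ℝ) < m.factorial := by exact_mod_cast m.factorial_pos
  have h2 : (n:ℝ) ^ m / m.factorial ≤ (Real.exp 1 * n / m) ^ m := by
    rw [div_le_iff₀ hfac, div_pow, div_mul_eq_mul_div, le_div_iff₀ (by positivity)]
    calc (n:ℝ) ^ m * (m:ℝ) ^ m ≤ (n:ℝ)^m * (Real.exp 1 ^ m * m.factorial) := by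
          apply mul_le_mul_of_nonneg_left (pow_self_le_exp_factorial m) (by positivity)
      _ = (Real.exp 1 * (n:ℝ)) ^ m * m.factorial := by rw [mul_pow]; ring
  have h3 : (Real.exp 1 * n / m : ℝ) ≤ Real.exp 1 / a := by
    rw [div_le_div_iff₀ hmR ha]
    have : a * n ≤ (m:ℝ) := hman
    nlinarith [Real.exp_pos 1]
  calc (n.choose m : ℝ) ≤ (Real.exp 1 * n / m) ^ m := le_trans h1 h2
    _ ≤ (Real.exp 1 / a) ^ m := pow_le_pow_left₀ (by positivity) h3 m

lemma geom_tail (r : ℝ) (hr0 : 0 ≤ r) (hr1 : r < 1) (K N : ℕ) :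
    ∑ m ∈ Finset.Ico K N, r ^ m ≤ r ^ K * (1 - r)⁻¹ := by
  rw [Finset.sum_Ico_eq_sum_range]
  have hs : HasSum (fun i : ℕ => r ^ K * r ^ i) (r ^ K * (1 - r)⁻¹) :=
    (hasSum_geometric_of_lt_one hr0 hr1).mul_left _
  have hb := sum_le_hasSum (Finset.range (N - K)) (fun i _ => by positivity) hs
  refine le_trans (le_of_eq ?_) hb
  exact Finset.sum_congr rfl fun i _ => by rw [pow_add]

lemma amgm_div {a b : ℝ} (ha : 0 < a) (hb : 0 < b) :
    a * b / (a + b) ≤ (1/2) * Real.sqrt (a * b) := by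
  have h1 : Real.sqrt a ^ 2 = a := Real.sq_sqrt ha.le
  have h2 : Real.sqrt b ^ 2 = b := Real.sq_sqrt hb.le
  have h3 : Real.sqrt (a*b) = Real.sqrt a * Real.sqrt b := Real.sqrt_mul ha.le b
  have h4 : 0 ≤ Real.sqrt a := Real.sqrt_nonneg a
  have h5 : 0 ≤ Real.sqrt b := Real.sqrt_nonneg b
  rw [div_le_iff₀ (by positivity), h3]
  have key : 2 * (Real.sqrt a * Real.sqrt b) ≤ a + b := by nlinarith [sq_nonneg (Real.sqrt a - Real.sqrt b)]
  have h6 : 0 ≤ Real.sqrt a * Real.sqrt b := by positivity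
  nlinarith [mul_le_mul_of_nonneg_left key h6]

section Main
variable {n : ℕ} {p q : ℝ} (hp : p ∈ Set.Ioo (0:ℝ) 1) (hq : q ∈ Set.Ioo (0:ℝ) 1)
include hp hq

lemma denom_pos {θ : Fin n → Bool} (hθ : θ ∈ Theta n) (x : ObsGraph n) :
    0 < ∑ η ∈ Theta n, unifPrior n η * graphPMF p q η x := by
  refine Finset.sum_pos' (fun η _ => ?_) ⟨θ, hθ, ?_⟩
  · have := graphPMF_pos hp hq η x
    have : (0:ℝ) < ((2:ℝ) ^ (n-1))⁻¹ := by positivity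
    unfold unifPrior
    positivity
  · have h1 := graphPMF_pos hp hq θ x
    have h2 : (0:ℝ) < ((2:ℝ) ^ (n-1))⁻¹ := by positivity
    exact mul_pos h2 h1

lemma expPost_split {θ : Fin n → Bool} (hθ : θ ∈ Theta n) (k : ℕ) :
    expPostMass p q (unifPrior n) θ (hball θ k)
      = 1 - expPostMass p q (unifPrior n) θ
          ((Theta n).filter fun η => ¬ kdist η θ ≤ k) := by
  unfold expPostMass
  have hsplit : ∀ x : ObsGraph n, postMass p q (unifPrior n) (hball θ k) x
      = 1 - postMass p q (unifPrior n) ((Theta n).filter fun η => ¬ kdist η θ ≤ k) x := by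
    intro x
    unfold postMass hball
    have hsum := Finset.sum_filter_add_sum_filter_not (Theta n) (fun η => kdist η θ ≤ k)
      (fun η => unifPrior n η * graphPMF p q η x)
    have hD := denom_pos hp hq hθ x
    rw [eq_sub_iff_add_eq, ← add_div, hsum]
    exact div_self (ne_of_gt hD)
  calc ∑ x : ObsGraph n, graphPMF p q θ x * postMass p q (unifPrior n) (hball θ k) x
      = ∑ x : ObsGraph n, (graphPMF p q θ x - graphPMF p q θ x *
          postMass p q (unifPrior n) ((Theta n).filter fun η => ¬ kdist η θ ≤ k) x) := by
        refine Finset.sum_congr rfl fun x _ => ?_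
        rw [hsplit x]; ring
    _ = 1 - ∑ x : ObsGraph n, graphPMF p q θ x *
          postMass p q (unifPrior n) ((Theta n).filter fun η => ¬ kdist η θ ≤ k) x := by
        rw [Finset.sum_sub_distrib, graphPMF_sum_one θ]

lemma expPost_le_affinity {θ : Fin n → Bool} (hθ : θ ∈ Theta n)
    {A : Finset (Fin n → Bool)} (hA : A ⊆ Theta n) (hθA : θ ∉ A) :
    expPostMass p q (unifPrior n) θ A ≤ ∑ η ∈ A, (1/2) * rho p q ^ (Dd θ η).card := by
  unfold expPostMass postMass
  have hc : (0:ℝ) < ((2:ℝ) ^ (n-1))⁻¹ := by positivity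
  have step1 : ∀ x : ObsGraph n, graphPMF p q θ x *
      ((∑ η ∈ A, unifPrior n η * graphPMF p q η x) /
        (∑ η ∈ Theta n, unifPrior n η * graphPMF p q η x))
      ≤ ∑ η ∈ A, graphPMF p q θ x * graphPMF p q η x /
          (graphPMF p q θ x + graphPMF p q η x) := by
    intro x
    have hD := denom_pos hp hq hθ x
    rw [Finset.sum_div, Finset.mul_sum]
    refine Finset.sum_le_sum fun η hη => ?_
    have hηp := graphPMF_pos hp hq η x
    have hθp := graphPMF_pos hp hq θ x
    have hne : θ ≠ η := fun h => hθA (h ▸ hη)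
    have hpair : unifPrior n θ * graphPMF p q θ x + unifPrior n η * graphPMF p q η x
        ≤ ∑ η' ∈ Theta n, unifPrior n η' * graphPMF p q η' x := by
      rw [← Finset.sum_pair (f := fun v => unifPrior n v * graphPMF p q v x) hne]
      refine Finset.sum_le_sum_of_subset_of_nonneg ?_ fun v hv _ => ?_
      · intro v hv
        rcases Finset.mem_insert.mp hv with h | h
        · exact h ▸ hθ
        · exact (Finset.mem_singleton.mp h) ▸ hA hη
      · have := graphPMF_pos hp hq v x
        unfold unifPrior
        positivity
    have hpairpos : 0 < unifPrior n θ * graphPMF p q θ x + unifPrior n η * graphPMF p q η x := by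
      unfold unifPrior
      positivity
    have h1 : unifPrior n η * graphPMF p q η x /
          (∑ η' ∈ Theta n, unifPrior n η' * graphPMF p q η' x)
        ≤ unifPrior n η * graphPMF p q η x /
          (unifPrior n θ * graphPMF p q θ x + unifPrior n η * graphPMF p q η x) := by
      refine div_le_div_of_nonneg_left ?_ hpairpos hpair
      unfold unifPrior
      positivity
    have h2 : unifPrior n η * graphPMF p q η x /
          (unifPrior n θ * graphPMF p q θ x + unifPrior n η * graphPMF p q η x)
        = graphPMF p q η x / (graphPMF p q θ x + graphPMF p q η x) := by
      unfold unifPrior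
      rw [← mul_add, mul_div_mul_left _ _ (ne_of_gt hc)]
    calc graphPMF p q θ x * (unifPrior n η * graphPMF p q η x /
            (∑ η' ∈ Theta n, unifPrior n η' * graphPMF p q η' x))
        ≤ graphPMF p q θ x * (graphPMF p q η x / (graphPMF p q θ x + graphPMF p q η x)) :=
          mul_le_mul_of_nonneg_left (h1.trans_eq h2) hθp.le
      _ = graphPMF p q θ x * graphPMF p q η x / (graphPMF p q θ x + graphPMF p q η x) :=
          (mul_div_assoc _ _ _).symm
  refine le_trans (Finset.sum_le_sum fun x (_ : x ∈ Finset.univ) => step1 x) ?_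
  rw [Finset.sum_comm]
  refine Finset.sum_le_sum fun η _ => ?_
  calc ∑ x : ObsGraph n, graphPMF p q θ x * graphPMF p q η x /
          (graphPMF p q θ x + graphPMF p q η x)
      ≤ ∑ x : ObsGraph n, (1/2) * Real.sqrt (graphPMF p q θ x * graphPMF p q η x) :=
        Finset.sum_le_sum fun x _ =>
          amgm_div (graphPMF_pos hp hq θ x) (graphPMF_pos hp hq η x)
    _ = (1/2) * ∑ x : ObsGraph n, Real.sqrt (graphPMF p q θ x * graphPMF p q η x) := by
        rw [Finset.mul_sum]
    _ = (1/2) * rho p q ^ (Dd θ η).card := by rw [affinity_eq hp hq]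

end Main

lemma hdist_symm {n : ℕ} (θ η : Fin n → Bool) : hdist θ η = hdist η θ := by
  unfold hdist
  congr 1
  exact Finset.filter_congr fun i _ => ne_comm

lemma kdist_self {n : ℕ} (θ : Fin n → Bool) : kdist θ θ = 0 := by
  have : hdist θ θ = 0 := by
    unfold hdist
    simp
  unfold kdist
  omega

theorem stmt10' (n : ℕ) (hn : 2 ≤ n) (p q : ℝ) (hp : p ∈ Set.Ioo (0:ℝ) 1)
    (hq : q ∈ Set.Ioo (0:ℝ) 1) (θ : Fin n → Bool) (hθ : θ ∈ Theta n)
    (a : ℝ) (ha : a ∈ Set.Ioo (0:ℝ) (1/2))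
    (hsmall : (Real.exp 1 / a) * rho p q ^ ((n : ℝ) / 2) < 1)
    (k : ℕ) (hk : a * n ≤ (k : ℝ)) :
    1 - (1/2) * ((Real.exp 1 / a) * rho p q ^ ((n : ℝ) / 2)) ^ (a * (n : ℝ))
        * (1 - (Real.exp 1 / a) * rho p q ^ ((n : ℝ) / 2))⁻¹
      ≤ expPostMass p q (unifPrior n) θ (hball θ k) := by
  classical
  set t : ℝ := rho p q ^ ((n : ℝ) / 2) with ht
  set r : ℝ := (Real.exp 1 / a) * t with hr
  -- basic positivity facts
  have hρpos : 0 < rho p q := by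
    unfold rho
    have h1 : 0 < Real.sqrt (p * q) := Real.sqrt_pos.mpr (mul_pos hp.1 hq.1)
    have h2 : 0 ≤ Real.sqrt ((1 - p) * (1 - q)) := Real.sqrt_nonneg _
    linarith
  have hea : (1:ℝ) ≤ Real.exp 1 / a := by
    rw [le_div_iff₀ ha.1]
    have := Real.add_one_le_exp (1:ℝ)
    have := ha.2
    linarith
  have htpos : 0 < t := Real.rpow_pos_of_pos hρpos _
  have hrpos : 0 < r := mul_pos (by linarith) htpos
  have ht1 : t < 1 := by
    calc t ≤ (Real.exp 1 / a) * t := le_mul_of_one_le_left htpos.le hea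
      _ < 1 := hsmall
  have hρ1 : rho p q ≤ 1 := by
    by_contra hcon
    push_neg at hcon
    have : (1:ℝ) < t := by
      rw [ht]
      refine Real.one_lt_rpow_iff_of_pos hρpos |>.mpr (Or.inl ⟨hcon, by positivity⟩)
    linarith
  set A : Finset (Fin n → Bool) := (Theta n).filter (fun η => ¬ kdist η θ ≤ k) with hAdef
  rw [expPost_split hp hq hθ k]
  have hθA : θ ∉ A := by
    simp only [hAdef, Finset.mem_filter, not_and, not_not]
    intro _
    rw [kdist_self]
    omega
  have key : expPostMass p q (unifPrior n) θ A ≤ (1/2) * (r ^ (a * (n:ℝ)) * (1 - r)⁻¹) := by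
    refine le_trans (expPost_le_affinity hp hq hθ (Finset.filter_subset _ _) hθA) ?_
    have step2 : ∀ η ∈ A, (1/2) * rho p q ^ (Dd θ η).card ≤ (1/2) * t ^ (kdist η θ) := by
      intro η hη
      have hle := hdist_le θ η
      have hcard : (Dd θ η).card = hdist θ η * (n - hdist θ η) := card_Dd θ η
      have hmk : kdist η θ * (n - kdist η θ) = hdist θ η * (n - hdist θ η) := by
        unfold kdist
        rw [← hdist_symm θ η]
        rcases le_or_gt (hdist θ η) (n - hdist θ η) with h | h
        · rw [min_eq_left h]
        · rw [min_eq_right h.le]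
          have h2 : n - (n - hdist θ η) = hdist θ η := by omega
          rw [h2, Nat.mul_comm]
      have h2m : 2 * kdist η θ ≤ n := by
        unfold kdist
        rw [← hdist_symm θ η]
        omega
      have hmn : kdist η θ ≤ n := by omega
      have hexp : ((n:ℝ)/2) * (kdist η θ : ℝ) ≤ ((Dd θ η).card : ℝ) := by
        rw [hcard, ← hmk]
        have hcast : ((kdist η θ * (n - kdist η θ) : ℕ) : ℝ)
            = (kdist η θ : ℝ) * ((n:ℝ) - (kdist η θ : ℝ)) := by
          push_cast [Nat.cast_sub hmn]
          ring
        rw [hcast]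
        have h2mR : 2 * (kdist η θ : ℝ) ≤ (n:ℝ) := by exact_mod_cast h2m
        nlinarith [Nat.cast_nonneg (α := ℝ) (kdist η θ)]
      have hpow : rho p q ^ (Dd θ η).card ≤ t ^ (kdist η θ) := by
        have e1 : rho p q ^ (Dd θ η).card = rho p q ^ (((Dd θ η).card : ℕ) : ℝ) :=
          (Real.rpow_natCast _ _).symm
        have e2 : t ^ (kdist η θ) = rho p q ^ (((n:ℝ)/2) * (kdist η θ : ℝ)) := by
          rw [ht, ← Real.rpow_natCast (rho p q ^ ((n:ℝ)/2)) (kdist η θ),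
            ← Real.rpow_mul hρpos.le]
        rw [e1, e2]
        exact Real.rpow_le_rpow_of_exponent_ge hρpos hρ1 hexp
      linarith
    refine le_trans (Finset.sum_le_sum step2) ?_
    rw [← Finset.mul_sum]
    have hfib : ∑ η ∈ A, t ^ (kdist η θ)
        = ∑ m ∈ Finset.range (n+1), ∑ η ∈ A.filter (fun η => kdist η θ = m), t ^ (kdist η θ) := by
      rw [Finset.sum_fiberwise_of_maps_to]
      intro η _
      rw [Finset.mem_range]
      have := hdist_le η θ
      unfold kdist
      omega
    have hinner : ∀ m ∈ Finset.range (n+1),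
        ∑ η ∈ A.filter (fun η => kdist η θ = m), t ^ (kdist η θ)
          ≤ if k + 1 ≤ m then r ^ m else 0 := by
      intro m _
      by_cases hm : k + 1 ≤ m
      · rw [if_pos hm]
        have hconst : ∑ η ∈ A.filter (fun η => kdist η θ = m), t ^ (kdist η θ)
            = (A.filter (fun η => kdist η θ = m)).card * t ^ m := by
          rw [Finset.sum_congr rfl (fun η hη => by
            rw [(Finset.mem_filter.mp hη).2]), Finset.sum_const, nsmul_eq_mul]
        rw [hconst]
        have hcardle : (A.filter (fun η => kdist η θ = m)).card ≤ n.choose m := by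
          refine le_trans (Finset.card_le_card ?_) (card_theta_kdist (by omega) θ m)
          exact Finset.filter_subset_filter _ (Finset.filter_subset _ _)
        have hman : a * n ≤ (m : ℝ) := by
          calc a * n ≤ (k : ℝ) := hk
            _ ≤ (m : ℝ) := by exact_mod_cast (by omega : k ≤ m)
        have hm1 : 1 ≤ m := by
          have hk1 : 1 ≤ k + 1 := by omega
          omega
        have hchoose : (n.choose m : ℝ) ≤ (Real.exp 1 / a) ^ m := choose_le_ea ha.1 hm1 hman
        calc ((A.filter (fun η => kdist η θ = m)).card : ℝ) * t ^ m
            ≤ (n.choose m : ℝ) * t ^ m := by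
              apply mul_le_mul_of_nonneg_right _ (by positivity)
              exact_mod_cast hcardle
          _ ≤ (Real.exp 1 / a) ^ m * t ^ m := by
              apply mul_le_mul_of_nonneg_right hchoose (by positivity)
          _ = r ^ m := by rw [hr, mul_pow]
      · rw [if_neg hm]
        have hempty : A.filter (fun η => kdist η θ = m) = ∅ := by
          refine Finset.eq_empty_of_forall_notMem fun η hη => ?_
          have h1 := Finset.mem_filter.mp hη
          have h2 := Finset.mem_filter.mp h1.1
          omega
        rw [hempty, Finset.sum_empty]
    have hite : ∑ m ∈ Finset.range (n+1), (if k + 1 ≤ m then r ^ m else 0)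
        = ∑ m ∈ Finset.Ico (k+1) (n+1), r ^ m := by
      rw [Finset.sum_ite, Finset.sum_const_zero, add_zero]
      refine Finset.sum_congr ?_ fun _ _ => rfl
      ext m
      simp only [Finset.mem_filter, Finset.mem_range, Finset.mem_Ico]
      omega
    have hgeom := geom_tail r hrpos.le hsmall (k+1) (n+1)
    have hrk : r ^ (k+1) ≤ r ^ (a * (n:ℝ)) := by
      have e3 : r ^ (k+1) = r ^ (((k+1 : ℕ)) : ℝ) := (Real.rpow_natCast _ _).symm
      rw [e3]
      refine Real.rpow_le_rpow_of_exponent_ge hrpos hsmall.le ?_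
      push_cast
      linarith
    have hfinal : ∑ η ∈ A, t ^ (kdist η θ) ≤ r ^ (a * (n:ℝ)) * (1 - r)⁻¹ := by
      rw [hfib]
      calc ∑ m ∈ Finset.range (n+1), ∑ η ∈ A.filter (fun η => kdist η θ = m), t ^ (kdist η θ)
          ≤ ∑ m ∈ Finset.range (n+1), (if k + 1 ≤ m then r ^ m else 0) :=
            Finset.sum_le_sum hinner
        _ = ∑ m ∈ Finset.Ico (k+1) (n+1), r ^ m := hite
        _ ≤ r ^ (k+1) * (1 - r)⁻¹ := hgeom
        _ ≤ r ^ (a * (n:ℝ)) * (1 - r)⁻¹ := by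
            apply mul_le_mul_of_nonneg_right hrk
            rw [inv_nonneg]
            linarith
    calc (1/2) * ∑ η ∈ A, t ^ (kdist η θ)
        ≤ (1/2) * (r ^ (a * (n:ℝ)) * (1 - r)⁻¹) := by linarith
      _ = (1/2) * (r ^ (a * (n:ℝ)) * (1 - r)⁻¹) := rfl
  linarith [key]

/-- lower bound for the expected posterior mass of the Hamming
ball `B_n(θ,k)`, for `k ≥ a n`. -/
theorem stmt10 (n : ℕ) (hn : 2 ≤ n) (p q : ℝ) (hp : p ∈ Set.Ioo (0:ℝ) 1)
    (hq : q ∈ Set.Ioo (0:ℝ) 1) (θ : Fin n → Bool) (hθ : θ ∈ Theta n)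
    (a : ℝ) (ha : a ∈ Set.Ioo (0:ℝ) (1/2))
    (hsmall : (Real.exp 1 / a) * rho p q ^ ((n : ℝ) / 2) < 1)
    (k : ℕ) (hk : a * n ≤ (k : ℝ)) :
    1 - (1/2) * ((Real.exp 1 / a) * rho p q ^ ((n : ℝ) / 2)) ^ (a * (n : ℝ))
        * (1 - (Real.exp 1 / a) * rho p q ^ ((n : ℝ) / 2))⁻¹
      ≤ expPostMass p q (unifPrior n) θ (hball θ k) :=
  stmt10' n hn p q hp hq θ hθ a ha hsmall k hk
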